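/- Let K be a field of characteristic zero, let f be a homogeneous polynomial of degree 3 in n variables over K, and let q ∈ Kⁿ be a point at which all n partial derivatives of f vanish (a singular point of the cubic; note f(q) = 0 then follows by Euler's identity). Then for every p ∈ Kⁿ, f( (Σᵢ qᵢ·(∂f/∂xᵢ)(p))·p − f(p)·q ) = 0. Geometrically: the line through an arbitrary point p and a singular point q of the cubic hypersurface {f = 0} meets the cubic in the third point ((q·∇f)(p))·p − f(p)·q. -/

import Mathlib

open MvPolynomial

namespace Stmt11Aux

variable {n : ℕ} {K : Type*} [CommRing K]

private lemma degree_sum_univ (d : Fin n →₀ ℕ) : d.degree = ∑ i, d i :=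
  Finset.sum_subset (Finset.subset_univ _)
    (fun i _ hi => Finsupp.notMem_support_iff.mp hi)

private lemma eval_monomial_univ (x : Fin n → K) (d : Fin n →₀ ℕ) (c : K) :
    eval x (monomial d c) = c * ∏ i, x i ^ d i := by
  rw [eval_monomial, Finsupp.prod_pow]

private lemma sub_single_apply_ne (d : Fin n →₀ ℕ) {i j : Fin n} (h : j ≠ i) :
    ((d - Finsupp.single i 1 : Fin n →₀ ℕ)) j = d j := by
  simp [Finsupp.sub_apply, Finsupp.single_apply, (Ne.symm h)]

private lemma sub_single_apply_self (d : Fin n →₀ ℕ) (i : Fin n) :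
    ((d - Finsupp.single i 1 : Fin n →₀ ℕ)) i = d i - 1 := by
  simp [Finsupp.sub_apply]

private lemma mul_prod_sub_single (x : Fin n → K) (d : Fin n →₀ ℕ) {i : Fin n}
    (hdi : d i ≠ 0) :
    x i * ∏ j, x j ^ (((d - Finsupp.single i 1 : Fin n →₀ ℕ)) j) = ∏ j, x j ^ d j := by
  rw [← Finset.mul_prod_erase Finset.univ (fun j => x j ^ d j) (Finset.mem_univ i),
    ← Finset.mul_prod_erase Finset.univ (fun j => x j ^ (((d - Finsupp.single i 1 : Fin n →₀ ℕ)) j))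
      (Finset.mem_univ i)]
  rw [Finset.prod_congr rfl (fun j hj => by
    rw [sub_single_apply_ne d (Finset.ne_of_mem_erase hj)])]
  rw [sub_single_apply_self, ← mul_assoc, ← pow_succ']
  congr 2
  omega

private lemma euler_monomial (d : Fin n →₀ ℕ) (c : K) (x : Fin n → K) :
    ∑ i, x i * eval x (pderiv i (monomial d c)) = (d.degree : K) * eval x (monomial d c) := by
  have key : ∀ i : Fin n, x i * eval x (pderiv i (monomial d c))
      = (d i : K) * (c * ∏ j, x j ^ d j) := by
    intro i
    rw [pderiv_monomial, eval_monomial_univ]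
    rcases eq_or_ne (d i) 0 with h | h
    · simp [h]
    · rw [← mul_prod_sub_single x d h]
      ring
  rw [Finset.sum_congr rfl (fun i _ => key i), ← Finset.sum_mul, eval_monomial_univ]
  congr 1
  rw [degree_sum_univ]
  push_cast
  rfl

private lemma degree_mem_support {f : MvPolynomial (Fin n) K} {m : ℕ}
    (hf : f.IsHomogeneous m) {d : Fin n →₀ ℕ} (hd : d ∈ f.support) : d.degree = m := by
  have h := hf (mem_support_iff.mp hd)
  rw [Finsupp.degree_eq_weight_one]
  exact h

private lemma euler {f : MvPolynomial (Fin n) K} {m : ℕ} (hf : f.IsHomogeneous m)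
    (x : Fin n → K) :
    (m : K) * eval x f = ∑ i, x i * eval x (pderiv i f) := by
  conv_lhs => rw [f.as_sum]
  conv_rhs => rw [f.as_sum]
  rw [map_sum, Finset.mul_sum]
  simp only [map_sum, Finset.mul_sum]
  rw [Finset.sum_comm]
  refine Finset.sum_congr rfl fun d hd => ?_
  rw [euler_monomial, degree_mem_support hf hd]

private lemma pderiv_isHomogeneous {f : MvPolynomial (Fin n) K} {m : ℕ}
    (hf : f.IsHomogeneous m) (i : Fin n) : (pderiv i f).IsHomogeneous (m - 1) := by
  conv_lhs => rw [f.as_sum]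
  rw [map_sum]
  apply IsHomogeneous.sum
  intro d hd
  rw [pderiv_monomial]
  rcases eq_or_ne (d i) 0 with h | h
  · rw [h]
    simpa using isHomogeneous_zero (Fin n) K (m - 1)
  · apply isHomogeneous_monomial
    have hdm : d.degree = m := degree_mem_support hf hd
    have h1 : d.degree = d i + ∑ j ∈ Finset.univ.erase i, d j := by
      rw [degree_sum_univ, ← Finset.add_sum_erase _ _ (Finset.mem_univ i)]
    have h2 : (d - Finsupp.single i 1).degree
        = (d i - 1) + ∑ j ∈ Finset.univ.erase i, d j := by
      rw [degree_sum_univ, ← Finset.add_sum_erase _ _ (Finset.mem_univ i),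
        sub_single_apply_self]
      congr 1
      exact Finset.sum_congr rfl fun j hj =>
        sub_single_apply_ne d (Finset.ne_of_mem_erase hj)
    omega

private lemma pderiv_comm' (a b : Fin n) (f : MvPolynomial (Fin n) K) :
    pderiv a (pderiv b f) = pderiv b (pderiv a f) := by
  induction f using MvPolynomial.induction_on' with
  | monomial d c =>
    rw [pderiv_monomial, pderiv_monomial, pderiv_monomial, pderiv_monomial]
    rcases eq_or_ne a b with rfl | hab
    · rfl
    · rw [sub_single_apply_ne d hab, sub_single_apply_ne d (Ne.symm hab),
        tsub_tsub, tsub_tsub, add_comm (Finsupp.single b 1) (Finsupp.single a 1),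
        mul_right_comm]
  | add f g hfi hgi => simp only [map_add, hfi, hgi]

private lemma eval_const_of_isHomogeneous_zero {f : MvPolynomial (Fin n) K}
    (hf : f.IsHomogeneous 0) (x y : Fin n → K) : eval x f = eval y f := by
  rw [eval_eq, eval_eq]
  refine Finset.sum_congr rfl fun d hd => ?_
  have hd0 : d = 0 := (Finsupp.degree_eq_zero_iff d).mp (degree_mem_support hf hd)
  subst hd0
  simp

end Stmt11Aux

open Stmt11Aux in
/-- The line through an arbitrary point `p` and a singular point `q` of a cubic
hypersurface `{f = 0}` meets the cubic in the third point
`((q·∇f)(p))·p − f(p)·q`. -/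
theorem stmt11 (K : Type*) [Field K] [CharZero K] (n : ℕ)
    (f : MvPolynomial (Fin n) K) (hf : f.IsHomogeneous 3)
    (q : Fin n → K) (hq : ∀ i, eval q (pderiv i f) = 0)
    (p : Fin n → K) :
    eval ((∑ i, q i * eval p (pderiv i f)) • p - (eval p f) • q) f = 0 := by
  classical
  set A : K := ∑ i, q i * eval p (pderiv i f) with hA
  set fp : K := eval p f with hfp
  have hg : ∀ i, (pderiv i f).IsHomogeneous 2 := fun i => pderiv_isHomogeneous hf i
  have hh : ∀ i j, (pderiv j (pderiv i f)).IsHomogeneous 1 :=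
    fun i j => pderiv_isHomogeneous (hg i) j
  have hT : ∀ i j k, (pderiv k (pderiv j (pderiv i f))).IsHomogeneous 0 :=
    fun i j k => pderiv_isHomogeneous (hh i j) k
  set t : Fin n → Fin n → Fin n → K :=
    fun i j k => eval q (pderiv k (pderiv j (pderiv i f))) with hts
  have ht : ∀ (i j k) (x : Fin n → K),
      eval x (pderiv k (pderiv j (pderiv i f))) = t i j k :=
    fun i j k x => eval_const_of_isHomogeneous_zero (hT i j k) x q
  have e1 : ∀ (i j) (x : Fin n → K),
      eval x (pderiv j (pderiv i f)) = ∑ k, x k * t i j k := by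
    intro i j x
    have h := euler (hh i j) x
    rw [Nat.cast_one, one_mul] at h
    rw [h]
    exact Finset.sum_congr rfl fun k _ => by rw [ht]
  have e2 : ∀ (i) (x : Fin n → K),
      (2 : K) * eval x (pderiv i f) = ∑ j, x j * eval x (pderiv j (pderiv i f)) :=
    fun i x => by simpa using euler (hg i) x
  have e3 : ∀ x : Fin n → K, (3 : K) * eval x f = ∑ i, x i * eval x (pderiv i f) :=
    fun x => by simpa using euler hf x
  set B : (Fin n → K) → (Fin n → K) → (Fin n → K) → K :=
    fun x y z => ∑ i, x i * ∑ j, y j * ∑ k, z k * t i j k with hB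
  have hByy : ∀ x y : Fin n → K, B x y y = ∑ i, x i * ((2 : K) * eval y (pderiv i f)) := by
    intro x y
    refine Finset.sum_congr rfl fun i _ => ?_
    congr 1
    rw [e2 i y]
    exact Finset.sum_congr rfl fun j _ => by rw [e1]
  have master : ∀ x : Fin n → K, (6 : K) * eval x f = B x x x := by
    intro x
    rw [hByy]
    calc (6 : K) * eval x f = 2 * (3 * eval x f) := by ring
      _ = 2 * ∑ i, x i * eval x (pderiv i f) := by rw [e3]
      _ = ∑ i, x i * (2 * eval x (pderiv i f)) := by
          rw [Finset.mul_sum]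
          exact Finset.sum_congr rfl fun i _ => by ring
  have tsym1 : ∀ i j k, t i j k = t j i k := by
    intro i j k
    simp only [hts]
    rw [pderiv_comm' j i f]
  have tsym2 : ∀ i j k, t i j k = t i k j := by
    intro i j k
    simp only [hts]
    rw [pderiv_comm' k j (pderiv i f)]
  have Bsym1 : ∀ x y z, B x y z = B y x z := by
    intro x y z
    simp only [hB, Finset.mul_sum]
    rw [Finset.sum_comm]
    refine Finset.sum_congr rfl fun j _ => Finset.sum_congr rfl fun i _ => ?_
    rw [Finset.sum_congr rfl fun k (_ : k ∈ Finset.univ) => by rw [tsym1 i j k]]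
    exact Finset.sum_congr rfl fun k _ => by ring
  have Bsym2 : ∀ x y z, B x y z = B x z y := by
    intro x y z
    simp only [hB]
    refine Finset.sum_congr rfl fun i _ => ?_
    congr 1
    simp only [Finset.mul_sum]
    rw [Finset.sum_comm]
    refine Finset.sum_congr rfl fun k _ => Finset.sum_congr rfl fun j _ => ?_
    rw [tsym2 i j k]
    ring
  have Blin : ∀ (a b : K) (x y z w), B (a • x + b • y) z w = a * B x z w + b * B y z w := by
    intro a b x y z w
    simp only [hB, Pi.add_apply, Pi.smul_apply, smul_eq_mul, add_mul,
      Finset.sum_add_distrib, Finset.mul_sum]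
    congr 1 <;>
      exact Finset.sum_congr rfl fun i _ =>
        Finset.sum_congr rfl fun j _ => Finset.sum_congr rfl fun k _ => by ring
  have Blin2 : ∀ (a b : K) (x y z w), B w (a • x + b • y) z = a * B w x z + b * B w y z := by
    intro a b x y z w
    rw [Bsym1 w _ z, Blin, Bsym1 x w z, Bsym1 y w z]
  have Blin3 : ∀ (a b : K) (x y z w), B w z (a • x + b • y) = a * B w z x + b * B w z y := by
    intro a b x y z w
    rw [Bsym2 w z _, Blin2, Bsym2 w x z, Bsym2 w y z]
  have hBppp : B p p p = 6 * fp := (master p).symm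
  have hBqpp : B q p p = 2 * A := by
    rw [hByy, hA, Finset.mul_sum]
    exact Finset.sum_congr rfl fun i _ => by ring
  have hBpqq : B p q q = 0 := by
    rw [hByy]
    exact Finset.sum_eq_zero fun i _ => by rw [hq i]; ring
  have hBqqq : B q q q = 0 := by
    rw [hByy]
    exact Finset.sum_eq_zero fun i _ => by rw [hq i]; ring
  have hBppq : B p p q = 2 * A := by rw [Bsym2 p p q, Bsym1 p q p, hBqpp]
  have hBpqp : B p q p = 2 * A := by rw [Bsym1 p q p, hBqpp]
  have hBqpq : B q p q = 0 := by rw [Bsym1 q p q, hBpqq]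
  have hBqqp : B q q p = 0 := by rw [Bsym2 q q p, Bsym1 q p q, hBpqq]
  set u : Fin n → K := A • p + (-fp) • q with hu
  have hgoal : A • p - fp • q = u := by rw [hu, sub_eq_add_neg, neg_smul]
  have h6 : (6 : K) * eval u f = 0 := by
    rw [master u]
    have e₁ : B u u u = A * B p u u + (-fp) * B q u u := Blin A (-fp) p q u u
    have e₂ : ∀ x, B x u u = A * B x p u + (-fp) * B x q u := fun x =>
      Blin2 A (-fp) p q u x
    have e₃ : ∀ x y, B x y u = A * B x y p + (-fp) * B x y q := fun x y =>
      Blin3 A (-fp) p q y x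
    rw [e₁, e₂ p, e₂ q, e₃ p p, e₃ p q, e₃ q p, e₃ q q,
      hBppp, hBppq, hBpqp, hBqpp, hBpqq, hBqpq, hBqqp, hBqqq]
    ring
  have h6ne : (6 : K) ≠ 0 := by norm_num
  rw [hgoal]
  exact (mul_eq_zero.mp h6).resolve_left h6ne
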